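/- Let 𝒜 be a unital ring and n ∈ ℕ. Let Q ∈ M_{n×n}(𝒜) be invertible, u ∈ M_{1×n}(𝒜), v ∈ M_{n×1}(𝒜), and let s ∈ 𝒜 be the unique entry of the 1×1 matrix u·Q⁻¹·v. Then the block matrix Q̂ := [[0, u], [v, −Q]] of size 1+n is invertible if and only if s is invertible in 𝒜; and in that case the (1,1) entry of Q̂⁻¹ equals s⁻¹, so that −[1, 0]·Q̂⁻¹·[1; 0] = −(u·Q⁻¹·v)⁻¹ as 1×1 matrices over 𝒜. -/

import Mathlib

set_option maxHeartbeats 1000000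

section Aux

variable {𝒜 : Type*} [Ring 𝒜]

lemma entry_mul_oneByOne (M N : Matrix (Fin 1) (Fin 1) 𝒜) :
    (M * N) 0 0 = M 0 0 * N 0 0 := by
  simp [Matrix.mul_apply]

lemma isUnit_oneByOne_iff (M : Matrix (Fin 1) (Fin 1) 𝒜) :
    IsUnit M ↔ IsUnit (M 0 0) := by
  constructor
  · intro h
    rcases h.nonempty_invertible with ⟨iM⟩
    have h1 : M 0 0 * (⅟M : Matrix (Fin 1) (Fin 1) 𝒜) 0 0 = 1 := by
      rw [← entry_mul_oneByOne, mul_invOf_self, Matrix.one_apply_eq]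
    have h2 : (⅟M : Matrix (Fin 1) (Fin 1) 𝒜) 0 0 * M 0 0 = 1 := by
      rw [← entry_mul_oneByOne, invOf_mul_self, Matrix.one_apply_eq]
    have : Invertible (M 0 0) := ⟨(⅟M : Matrix (Fin 1) (Fin 1) 𝒜) 0 0, h2, h1⟩
    exact isUnit_of_invertible _
  · intro h
    rcases h.nonempty_invertible with ⟨is⟩
    have : Invertible M :=
      ⟨Matrix.of fun _ _ => ⅟(M 0 0),
        by ext i j; fin_cases i; fin_cases j; simp [Matrix.mul_apply],
        by ext i j; fin_cases i; fin_cases j; simp [Matrix.mul_apply]⟩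
    exact isUnit_of_invertible M

lemma ringInverse_oneByOne (M : Matrix (Fin 1) (Fin 1) 𝒜) :
    Ring.inverse M 0 0 = Ring.inverse (M 0 0) := by
  by_cases h : IsUnit (M 0 0)
  · have hM : IsUnit M := (isUnit_oneByOne_iff M).mpr h
    rcases hM.nonempty_invertible with ⟨iM⟩
    rcases h.nonempty_invertible with ⟨is⟩
    rw [Ring.inverse_invertible (x := M), Ring.inverse_invertible (x := M 0 0)]
    symm
    apply invOf_eq_right_inv
    rw [← entry_mul_oneByOne, mul_invOf_self, Matrix.one_apply_eq]
  · rw [Ring.inverse_non_unit _ h,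
      Ring.inverse_non_unit _ (fun hM => h ((isUnit_oneByOne_iff M).mp hM))]
    rfl

lemma pick_entry {m : Type*} [Fintype m]
    (M : Matrix (Fin 1 ⊕ m) (Fin 1 ⊕ m) 𝒜) :
    Matrix.fromCols (1 : Matrix (Fin 1) (Fin 1) 𝒜) (0 : Matrix (Fin 1) m 𝒜) * M *
        Matrix.fromRows (1 : Matrix (Fin 1) (Fin 1) 𝒜) (0 : Matrix m (Fin 1) 𝒜) =
      Matrix.of fun _ _ => M (Sum.inl 0) (Sum.inl 0) := by
  ext i j
  fin_cases i; fin_cases j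
  simp [Matrix.mul_apply, Fintype.sum_sum_type, Matrix.fromCols, Matrix.fromRows_apply_inl, Matrix.fromRows_apply_inr,
    Matrix.one_apply]

end Aux

section Schur

variable {𝒜 : Type*} [Ring 𝒜] {n : ℕ}
variable (Q : Matrix (Fin n) (Fin n) 𝒜) [Invertible Q]
variable (u : Matrix (Fin 1) (Fin n) 𝒜) (v : Matrix (Fin n) (Fin 1) 𝒜)

section WithInv

variable [Invertible (u * ⅟Q * v)]

lemma aux_k1 : ⅟(u * ⅟Q * v) * (u * (⅟Q * v)) = 1 := by
  rw [← Matrix.mul_assoc u ⅟Q v, invOf_mul_self]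

lemma aux_k1' {κ : Type*} (X : Matrix (Fin 1) κ 𝒜) :
    ⅟(u * ⅟Q * v) * (u * (⅟Q * (v * X))) = X := by
  rw [← Matrix.mul_assoc u ⅟Q, ← Matrix.mul_assoc (u * ⅟Q) v X, Matrix.invOf_mul_cancel_left]

lemma aux_k2 : u * (⅟Q * (v * ⅟(u * ⅟Q * v))) = 1 := by
  rw [← Matrix.mul_assoc u ⅟Q, ← Matrix.mul_assoc (u * ⅟Q) v, mul_invOf_self]

lemma aux_k2' {κ : Type*} (X : Matrix (Fin 1) κ 𝒜) :
    u * (⅟Q * (v * (⅟(u * ⅟Q * v) * X))) = X := by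
  rw [← Matrix.mul_assoc u ⅟Q, ← Matrix.mul_assoc (u * ⅟Q) v, Matrix.mul_invOf_cancel_left]

/-- Explicit inverse of the block matrix `[[0, u], [v, -Q]]`. -/
def schurInvertible :
    Invertible (Matrix.fromBlocks (0 : Matrix (Fin 1) (Fin 1) 𝒜) u v (-Q)) where
  invOf := Matrix.fromBlocks (⅟(u * ⅟Q * v)) (⅟(u * ⅟Q * v) * u * ⅟Q)
      (⅟Q * v * ⅟(u * ⅟Q * v)) (-⅟Q + ⅟Q * v * ⅟(u * ⅟Q * v) * u * ⅟Q)
  invOf_mul_self := by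
    rw [Matrix.fromBlocks_multiply]
    simp [Matrix.mul_assoc, Matrix.mul_add, Matrix.add_mul, Matrix.mul_neg, Matrix.neg_mul,
      aux_k1, aux_k1', aux_k2, aux_k2', invOf_mul_self, mul_invOf_self,
      Matrix.invOf_mul_cancel_left, Matrix.mul_invOf_cancel_left,
      Matrix.invOf_mul_cancel_right, Matrix.mul_invOf_cancel_right]
  mul_invOf_self := by
    rw [Matrix.fromBlocks_multiply]
    simp [Matrix.mul_assoc, Matrix.mul_add, Matrix.add_mul, Matrix.mul_neg, Matrix.neg_mul,
      aux_k1, aux_k1', aux_k2, aux_k2', invOf_mul_self, mul_invOf_self,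
      Matrix.invOf_mul_cancel_left, Matrix.mul_invOf_cancel_left,
      Matrix.invOf_mul_cancel_right, Matrix.mul_invOf_cancel_right]

end WithInv

lemma schur_isUnit
    (h : IsUnit (Matrix.fromBlocks (0 : Matrix (Fin 1) (Fin 1) 𝒜) u v (-Q))) :
    IsUnit (u * ⅟Q * v) := by
  rcases h.nonempty_invertible with ⟨iM⟩
  set M : Matrix (Fin 1 ⊕ Fin n) (Fin 1 ⊕ Fin n) 𝒜 :=
    Matrix.fromBlocks (0 : Matrix (Fin 1) (Fin 1) 𝒜) u v (-Q) with hM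
  set P := (⅟M : Matrix (Fin 1 ⊕ Fin n) (Fin 1 ⊕ Fin n) 𝒜) with hP
  set P11 := P.toBlocks₁₁ with hP11
  set P12 := P.toBlocks₁₂ with hP12
  set P21 := P.toBlocks₂₁ with hP21
  set P22 := P.toBlocks₂₂ with hP22
  have hPM : P * M = 1 := invOf_mul_self _
  have hMP : M * P = 1 := mul_invOf_self _
  rw [hM, ← Matrix.fromBlocks_toBlocks P, ← hP11, ← hP12, ← hP21, ← hP22,
    Matrix.fromBlocks_multiply, ← Matrix.fromBlocks_one] at hPM hMP
  have t11 : (1 : Matrix (Fin 1 ⊕ Fin n) (Fin 1 ⊕ Fin n) 𝒜).toBlocks₁₁ = 1 := by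
    ext i j; simp [Matrix.toBlocks₁₁, Matrix.one_apply, Sum.inl.injEq]
  -- extract block equations
  have eA : u * P21 = 1 := by
    have := congrArg Matrix.toBlocks₁₁ hMP
    simpa [t11] using this
  have eB : v * P11 + -Q * P21 = 0 := by
    have := congrArg Matrix.toBlocks₂₁ hMP
    simpa [show (1 : Matrix (Fin 1 ⊕ Fin n) (Fin 1 ⊕ Fin n) 𝒜).toBlocks₂₁ = 0 from by
      ext i j; simp [Matrix.toBlocks₂₁, Matrix.one_apply]] using this
  have eC : P12 * v = 1 := by
    have := congrArg Matrix.toBlocks₁₁ hPM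
    simpa [t11] using this
  have eD : P11 * u + P12 * -Q = 0 := by
    have := congrArg Matrix.toBlocks₁₂ hPM
    simpa [show (1 : Matrix (Fin 1 ⊕ Fin n) (Fin 1 ⊕ Fin n) 𝒜).toBlocks₁₂ = 0 from by
      ext i j; simp [Matrix.toBlocks₁₂, Matrix.one_apply]] using this
  -- solve
  have hP21' : P21 = ⅟Q * (v * P11) := by
    have h1 : Q * P21 = v * P11 := by
      have := eB
      rw [Matrix.neg_mul, add_neg_eq_zero] at this
      exact this.symm
    rw [← h1, Matrix.invOf_mul_cancel_left]
  have hP12' : P12 = P11 * u * ⅟Q := by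
    have h1 : P11 * u = P12 * Q := by
      have := eD
      rw [Matrix.mul_neg, add_neg_eq_zero] at this
      exact this
    rw [h1, Matrix.mul_invOf_cancel_right]
  have left : P11 * (u * ⅟Q * v) = 1 := by
    rw [← eC, hP12', Matrix.mul_assoc (P11 * u) ⅟Q v, Matrix.mul_assoc P11 u (⅟Q * v),
      ← Matrix.mul_assoc u ⅟Q v]
  have right : (u * ⅟Q * v) * P11 = 1 := by
    rw [← eA, hP21', ← Matrix.mul_assoc u ⅟Q, ← Matrix.mul_assoc (u * ⅟Q) v P11]
  have : Invertible (u * ⅟Q * v) := ⟨P11, left, right⟩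
  exact isUnit_of_invertible _

end Schur

/-- The inversion rule for formal linear representations: `[[0,u],[v,−Q]]` is invertible iff
the entry `s` of `u·Q⁻¹·v` is, and in that case the `(1,1)` entry of the inverse is `s⁻¹`,
so that `−[1,0]·Q̂⁻¹·[1;0] = −(u·Q⁻¹·v)⁻¹`. -/
theorem stmt_11 (𝒜 : Type*) [Ring 𝒜] (n : ℕ)
    (Q : Matrix (Fin n) (Fin n) 𝒜) [Invertible Q]
    (u : Matrix (Fin 1) (Fin n) 𝒜) (v : Matrix (Fin n) (Fin 1) 𝒜) :
    let s : 𝒜 := (u * ⅟Q * v) 0 0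
    let Qhat : Matrix (Fin 1 ⊕ Fin n) (Fin 1 ⊕ Fin n) 𝒜 := Matrix.fromBlocks 0 u v (-Q)
    (IsUnit Qhat ↔ IsUnit s) ∧
      (IsUnit s →
        Ring.inverse Qhat (Sum.inl 0) (Sum.inl 0) = Ring.inverse s ∧
          -(Matrix.fromCols (1 : Matrix (Fin 1) (Fin 1) 𝒜) (0 : Matrix (Fin 1) (Fin n) 𝒜) * Ring.inverse Qhat *
              Matrix.fromRows (1 : Matrix (Fin 1) (Fin 1) 𝒜) (0 : Matrix (Fin n) (Fin 1) 𝒜)) =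
            -Ring.inverse (u * ⅟Q * v)) := by
  intro s Qhat
  have hiff : IsUnit Qhat ↔ IsUnit s := by
    constructor
    · intro h
      exact (isUnit_oneByOne_iff _).mp (schur_isUnit Q u v h)
    · intro hs
      have hM : IsUnit (u * ⅟Q * v) := (isUnit_oneByOne_iff _).mpr hs
      rcases hM.nonempty_invertible with ⟨iS⟩
      letI := iS
      letI := schurInvertible Q u v
      exact isUnit_of_invertible _
  refine ⟨hiff, fun hs => ?_⟩
  have hM : IsUnit (u * ⅟Q * v) := (isUnit_oneByOne_iff _).mpr hs
  rcases hM.nonempty_invertible with ⟨iS⟩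
  letI := iS
  letI iQhat := schurInvertible Q u v
  have h2 : Ring.inverse Qhat =
      ⅟(Matrix.fromBlocks (0 : Matrix (Fin 1) (Fin 1) 𝒜) u v (-Q)) :=
    Ring.inverse_invertible _
  have h3 : (⅟(Matrix.fromBlocks (0 : Matrix (Fin 1) (Fin 1) 𝒜) u v (-Q))
        : Matrix (Fin 1 ⊕ Fin n) (Fin 1 ⊕ Fin n) 𝒜) =
      Matrix.fromBlocks (⅟(u * ⅟Q * v)) (⅟(u * ⅟Q * v) * u * ⅟Q)
        (⅟Q * v * ⅟(u * ⅟Q * v)) (-⅟Q + ⅟Q * v * ⅟(u * ⅟Q * v) * u * ⅟Q) := rfl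
  have hentry : Ring.inverse Qhat (Sum.inl 0) (Sum.inl 0) = Ring.inverse s := by
    rw [h2, h3, Matrix.fromBlocks_apply₁₁,
      show (⅟(u * ⅟Q * v) : Matrix (Fin 1) (Fin 1) 𝒜) = Ring.inverse (u * ⅟Q * v) from
        (Ring.inverse_invertible _).symm,
      ringInverse_oneByOne]
  refine ⟨hentry, ?_⟩
  rw [pick_entry, hentry]
  ext i j
  fin_cases i; fin_cases j
  simp only [Matrix.neg_apply, Matrix.of_apply, neg_inj]
  show Ring.inverse s = Ring.inverse (u * ⅟Q * v) 0 0
  rw [ringInverse_oneByOne]
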